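/- Let (P, y) be a KZ doctrine on a 2-category 𝒞 and A an object. Define Py_A := lan_{y_A} (the left extension of y_{PA}·y_A along y_A) and μ_A := \overline{id_{PA}} (the left extension of id_{PA} along y_{PA}). Then there is an adjoint triple Py_A ⊣ μ_A ⊣ y_{PA}; in particular both y_A and R_{y_A} = id_{PA} are P-admissible, and R_{R_{y_A}} = y_{PA}. -/
import Mathlib


open CategoryTheory Bicategory

universe w v u

variable {𝒞 : Type u} [Bicategory.{w, v} 𝒞]

/-- A 2-cell `η : I ⟶ L ≫ R` exhibits `R` as a left extension of `I` along `L` when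
pasting with `η` gives a bijection between 2-cells `R ⟶ M` and 2-cells `I ⟶ L ≫ M`. -/
def ExhibitsLeftExt {a b c : 𝒞} (L : a ⟶ b) (I : a ⟶ c) (R : b ⟶ c)
    (η : I ⟶ L ≫ R) : Prop :=
  ∀ M : b ⟶ c, Function.Bijective (fun σ : R ⟶ M => η ≫ L ◁ σ)

/-- The left extension `(R, η)` of `I` along `L` is respected by `E` when the whiskering of
`η` by `E` exhibits `R ≫ E` as a left extension of `I ≫ E` along `L`. -/
def RespectsLeftExt {a b c d : 𝒞} (L : a ⟶ b) (I : a ⟶ c) (R : b ⟶ c)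
    (η : I ⟶ L ≫ R) (E : c ⟶ d) : Prop :=
  ExhibitsLeftExt L (I ≫ E) (R ≫ E) ((η ▷ E) ≫ (α_ L R E).hom)

/-- A 2-cell `η : I ⟶ L ≫ R` exhibits `L` as a left lifting of `I` through `R` when pasting
with `η` gives a bijection between 2-cells `L ⟶ K` and 2-cells `I ⟶ K ≫ R`. -/
def ExhibitsLeftLift {a b c : 𝒞} (R : b ⟶ c) (I : a ⟶ c) (L : a ⟶ b)
    (η : I ⟶ L ≫ R) : Prop :=
  ∀ K : a ⟶ b, Function.Bijective (fun δ : L ⟶ K => η ≫ δ ▷ R)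

/-- The left lifting is absolute when it is preserved by whiskering with any 1-cell `F`. -/
def ExhibitsAbsLeftLift {a b c : 𝒞} (R : b ⟶ c) (I : a ⟶ c) (L : a ⟶ b)
    (η : I ⟶ L ≫ R) : Prop :=
  ∀ {x : 𝒞} (F : x ⟶ a),
    ExhibitsLeftLift R (F ≫ I) (F ≫ L) ((F ◁ η) ≫ (α_ F L R).inv)

/-- A 1-cell is (representably) fully faithful when whiskering by it is bijective on 2-cells. -/
def FullyFaithful1Cell {a b : 𝒞} (F : a ⟶ b) : Prop :=
  ∀ {x : 𝒞} (u v : x ⟶ a), Function.Bijective (fun σ : u ⟶ v => σ ▷ F)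

/-- A KZ doctrine on a 2-category (Marmolejo–Wood style, in terms of left extensions). -/
structure KZDoctrine (𝒞 : Type u) [Bicategory.{w, v} 𝒞] where
  /-- action on objects -/
  P : 𝒞 → 𝒞
  /-- the units -/
  y : ∀ A : 𝒞, A ⟶ P A
  /-- chosen left extensions along the units -/
  ext : ∀ {A C : 𝒞}, (A ⟶ P C) → (P A ⟶ P C)
  /-- the invertible 2-cells exhibiting the chosen left extensions -/
  c : ∀ {A C : 𝒞} (F : A ⟶ P C), F ≅ y A ≫ ext F
  ext_isLeftExt : ∀ {A C : 𝒞} (F : A ⟶ P C),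
    ExhibitsLeftExt (y A) F (ext F) (c F).hom
  /-- (a) the identity 2-cell exhibits `𝟙 (P A)` as a left extension of `y A` along `y A` -/
  y_selfExt : ∀ A : 𝒞, ExhibitsLeftExt (y A) (y A) (𝟙 (P A)) (ρ_ (y A)).inv
  /-- (b) the chosen left extensions respect each other -/
  ext_respects : ∀ {A B C : 𝒞} (F : A ⟶ P B) (G : B ⟶ P C),
    RespectsLeftExt (y A) F (ext F) (c F).hom (ext G)

/-- `lan L` (also denoted `PL`), the chosen left extension of `y B ∘ L` along `y A`. -/
abbrev KZDoctrine.lan (D : KZDoctrine 𝒞) {A B : 𝒞} (L : A ⟶ B) : D.P A ⟶ D.P B :=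
  D.ext (L ≫ D.y B)

/-- An object `X` is `P`-cocomplete when every `G : A ⟶ X` admits a left extension along
`y A` exhibited by an invertible 2-cell, and these left extensions respect the chosen left
extensions of the KZ doctrine. -/
def PCocomplete (D : KZDoctrine 𝒞) (X : 𝒞) : Prop :=
  ∀ {A : 𝒞} (G : A ⟶ X), ∃ (Gb : D.P A ⟶ X) (cG : G ≅ D.y A ≫ Gb),
    ExhibitsLeftExt (D.y A) G Gb cG.hom ∧
    ∀ {A' : 𝒞} (F : A' ⟶ D.P A),
      RespectsLeftExt (D.y A') F (D.ext F) (D.c F).hom Gb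

/-- A 1-cell is a `P`-homomorphism when it respects all left extensions along units. -/
def PHomomorphism (D : KZDoctrine 𝒞) {X Y : 𝒞} (E : X ⟶ Y) : Prop :=
  ∀ {A : 𝒞} (G : A ⟶ X) (Gb : D.P A ⟶ X) (η : G ⟶ D.y A ≫ Gb),
    ExhibitsLeftExt (D.y A) G Gb η → RespectsLeftExt (D.y A) G Gb η E

/-- The data `(R, φ)` witnesses `P`-admissibility of `L`: `φ` exhibits `R` as a left
extension of `y A` along `L`, and this left extension is respected by every left extension
`Hb : P A ⟶ X` along `y A` into every `P`-cocomplete object `X`. -/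
def AdmissibleData (D : KZDoctrine 𝒞) {A B : 𝒞} (L : A ⟶ B) (R : B ⟶ D.P A)
    (φ : D.y A ⟶ L ≫ R) : Prop :=
  ExhibitsLeftExt L (D.y A) R φ ∧
  ∀ {X : 𝒞}, PCocomplete D X →
    ∀ (H : A ⟶ X) (Hb : D.P A ⟶ X) (cH : H ≅ D.y A ≫ Hb),
      ExhibitsLeftExt (D.y A) H Hb cH.hom → RespectsLeftExt L (D.y A) R φ Hb

/-- A 1-cell `L` is `P`-admissible when some `(R, φ)` witnesses its admissibility. -/
def PAdmissible (D : KZDoctrine 𝒞) {A B : 𝒞} (L : A ⟶ B) : Prop :=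
  ∃ (R : B ⟶ D.P A) (φ : D.y A ⟶ L ≫ R), AdmissibleData D L R φ

section Helpers


lemma bij_comp_left {a b : 𝒞} {f g h : a ⟶ b} (e : f ≅ g) :
    Function.Bijective (fun x : g ⟶ h => e.hom ≫ x) :=
  Function.bijective_iff_has_inverse.mpr
    ⟨fun x => e.inv ≫ x, fun x => by simp, fun x => by simp⟩

lemma bij_comp_right {a b : 𝒞} {f g h : a ⟶ b} (e : g ≅ h) :
    Function.Bijective (fun x : f ⟶ g => x ≫ e.hom) :=
  Function.bijective_iff_has_inverse.mpr
    ⟨fun x => x ≫ e.inv, fun x => by simp, fun x => by simp⟩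

namespace ExhibitsLeftExt

variable {a b c : 𝒞} {L : a ⟶ b} {I : a ⟶ c} {R : b ⟶ c} {η : I ⟶ L ≫ R}

/-- The universal map of a left extension. -/
noncomputable def lift (h : ExhibitsLeftExt L I R η) {M : b ⟶ c} (τ : I ⟶ L ≫ M) : R ⟶ M :=
  (Equiv.ofBijective _ (h M)).symm τ

lemma fac (h : ExhibitsLeftExt L I R η) {M : b ⟶ c} (τ : I ⟶ L ≫ M) :
    η ≫ L ◁ h.lift τ = τ :=
  (Equiv.ofBijective _ (h M)).apply_symm_apply τ

lemma hom_ext (h : ExhibitsLeftExt L I R η) {M : b ⟶ c} {σ σ' : R ⟶ M}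
    (w : η ≫ L ◁ σ = η ≫ L ◁ σ') : σ = σ' := (h M).1 w

/-- Transfer an `ExhibitsLeftExt` along isomorphisms of the input and the extension. -/
lemma of_iso {I' : a ⟶ c} {R' : b ⟶ c} (h : ExhibitsLeftExt L I R η)
    (eI : I' ≅ I) (eR : R ≅ R') {η' : I' ⟶ L ≫ R'}
    (w : η' = eI.hom ≫ η ≫ L ◁ eR.hom) : ExhibitsLeftExt L I' R' η' := by
  intro M
  have key : (fun τ : R' ⟶ M => η' ≫ L ◁ τ)
      = (fun x : I ⟶ L ≫ M => eI.hom ≫ x) ∘ (fun σ : R ⟶ M => η ≫ L ◁ σ)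
        ∘ (fun τ : R' ⟶ M => eR.hom ≫ τ) := by
    funext τ
    simp [w]
  rw [key]
  exact (bij_comp_left eI).comp ((h M).comp (bij_comp_left eR))

end ExhibitsLeftExt

/-- Any 1-cell is a left extension of itself along the identity. -/
lemma exhibits_id_ext {a c : 𝒞} (f : a ⟶ c) : ExhibitsLeftExt (𝟙 a) f f (λ_ f).inv := by
  intro M
  have key : (fun σ : f ⟶ M => (λ_ f).inv ≫ 𝟙 a ◁ σ) = fun σ : f ⟶ M => σ ≫ (λ_ M).inv := by
    funext σ; simp
  rw [key]
  exact bij_comp_right (λ_ M).symm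

end Helpers

section KZAdj

variable (D : KZDoctrine 𝒞) (A : 𝒞)

lemma respects_toExhibits {a b c d : 𝒞} {L : a ⟶ b} {I : a ⟶ c} {R : b ⟶ c}
    {η : I ⟶ L ≫ R} {E : c ⟶ d} (h : RespectsLeftExt L I R η E) :
    ExhibitsLeftExt L (I ≫ E) (R ≫ E) ((η ▷ E) ≫ (α_ L R E).hom) := h

/-- The unit of `μ_A ⊣ y_{P A}`. -/
noncomputable def muUnit : 𝟙 (D.P (D.P A)) ⟶ D.ext (𝟙 (D.P A)) ≫ D.y (D.P A) :=
  (D.y_selfExt (D.P A)).lift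
    ((λ_ (D.y (D.P A))).inv ≫ (D.c (𝟙 (D.P A))).hom ▷ D.y (D.P A) ≫ (α_ _ _ _).hom)

lemma muUnit_fac :
    (ρ_ (D.y (D.P A))).inv ≫ D.y (D.P A) ◁ muUnit D A
      = (λ_ (D.y (D.P A))).inv ≫ (D.c (𝟙 (D.P A))).hom ▷ D.y (D.P A) ≫ (α_ _ _ _).hom :=
  (D.y_selfExt (D.P A)).fac _

lemma whiskerLeft_muUnit :
    D.y (D.P A) ◁ muUnit D A
      = (ρ_ (D.y (D.P A))).hom ≫ (λ_ (D.y (D.P A))).inv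
          ≫ (D.c (𝟙 (D.P A))).hom ▷ D.y (D.P A) ≫ (α_ _ _ _).hom := by
  rw [← muUnit_fac D A, Iso.hom_inv_id_assoc]

/-- The adjunction `μ_A ⊣ y_{P A}`. -/
noncomputable def adjMuY :
    Bicategory.Adjunction (D.ext (𝟙 (D.P A))) (D.y (D.P A)) where
  unit := muUnit D A
  counit := (D.c (𝟙 (D.P A))).inv
  left_triangle := by
    have key : (λ_ (D.ext (𝟙 (D.P A)))).inv
        ≫ leftZigzag (muUnit D A) (D.c (𝟙 (D.P A))).inv ≫ (ρ_ (D.ext (𝟙 (D.P A)))).hom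
        = 𝟙 (D.ext (𝟙 (D.P A))) := by
      apply (D.ext_isLeftExt (𝟙 (D.P A))).hom_ext
      rw [Bicategory.whiskerLeft_id, Category.comp_id]
      calc (D.c (𝟙 (D.P A))).hom ≫ D.y (D.P A) ◁ ((λ_ (D.ext (𝟙 (D.P A)))).inv
              ≫ leftZigzag (muUnit D A) (D.c (𝟙 (D.P A))).inv ≫ (ρ_ (D.ext (𝟙 (D.P A)))).hom)
          = (D.c (𝟙 (D.P A))).hom ⊗≫ (D.y (D.P A) ◁ muUnit D A) ▷ D.ext (𝟙 (D.P A))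
              ⊗≫ (D.y (D.P A) ≫ D.ext (𝟙 (D.P A))) ◁ (D.c (𝟙 (D.P A))).inv ⊗≫ 𝟙 _ := by
            bicategory
        _ = (D.c (𝟙 (D.P A))).hom
              ⊗≫ ((D.c (𝟙 (D.P A))).hom ▷ (D.y (D.P A) ≫ D.ext (𝟙 (D.P A)))
                ≫ (D.y (D.P A) ≫ D.ext (𝟙 (D.P A))) ◁ (D.c (𝟙 (D.P A))).inv) ⊗≫ 𝟙 _ := by
            rw [whiskerLeft_muUnit]; bicategory
        _ = ((D.c (𝟙 (D.P A))).hom ≫ (D.c (𝟙 (D.P A))).inv) ⊗≫ (D.c (𝟙 (D.P A))).hom := by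
            rw [← whisker_exchange]; bicategory
        _ = (D.c (𝟙 (D.P A))).hom := by rw [Iso.hom_inv_id]; bicategory
    calc leftZigzag (muUnit D A) (D.c (𝟙 (D.P A))).inv
        = (λ_ _).hom ≫ ((λ_ _).inv
            ≫ leftZigzag (muUnit D A) (D.c (𝟙 (D.P A))).inv ≫ (ρ_ _).hom) ≫ (ρ_ _).inv := by
          simp
      _ = (λ_ _).hom ≫ (ρ_ _).inv := by rw [key]; simp
  right_triangle := by
    calc rightZigzag (muUnit D A) (D.c (𝟙 (D.P A))).inv
        = (ρ_ (D.y (D.P A))).hom ≫ (λ_ (D.y (D.P A))).inv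
            ≫ ((D.c (𝟙 (D.P A))).hom ≫ (D.c (𝟙 (D.P A))).inv) ▷ D.y (D.P A) := by
          rw [rightZigzag, whiskerLeft_muUnit]; bicategory
      _ = (ρ_ _).hom ≫ (λ_ _).inv := by rw [Iso.hom_inv_id]; simp

end KZAdj

section KZAdjLan

variable (D : KZDoctrine 𝒞) (A : 𝒞)

/-- The canonical comparison `P y_A ⟶ y_{P A}`. -/
noncomputable def theta : D.lan (D.y A) ⟶ D.y (D.P A) :=
  (D.ext_isLeftExt (D.y A ≫ D.y (D.P A))).lift (𝟙 (D.y A ≫ D.y (D.P A)))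

lemma theta_fac :
    (D.c (D.y A ≫ D.y (D.P A))).hom ≫ D.y A ◁ theta D A = 𝟙 (D.y A ≫ D.y (D.P A)) :=
  (D.ext_isLeftExt (D.y A ≫ D.y (D.P A))).fac _

/-- The unit of `P y_A ⊣ μ_A`. -/
noncomputable def lanUnit : 𝟙 (D.P A) ⟶ D.lan (D.y A) ≫ D.ext (𝟙 (D.P A)) :=
  (D.y_selfExt A).lift
    ((ρ_ (D.y A)).inv ≫ D.y A ◁ (D.c (𝟙 (D.P A))).hom ≫ (α_ _ _ _).inv
      ≫ (D.c (D.y A ≫ D.y (D.P A))).hom ▷ D.ext (𝟙 (D.P A)) ≫ (α_ _ _ _).hom)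

lemma lanUnit_fac :
    (ρ_ (D.y A)).inv ≫ D.y A ◁ lanUnit D A
      = (ρ_ (D.y A)).inv ≫ D.y A ◁ (D.c (𝟙 (D.P A))).hom ≫ (α_ _ _ _).inv
          ≫ (D.c (D.y A ≫ D.y (D.P A))).hom ▷ D.ext (𝟙 (D.P A)) ≫ (α_ _ _ _).hom :=
  (D.y_selfExt A).fac _

lemma whiskerLeft_lanUnit :
    D.y A ◁ lanUnit D A
      = (ρ_ (D.y A)).hom ≫ (ρ_ (D.y A)).inv ≫ D.y A ◁ (D.c (𝟙 (D.P A))).hom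
          ≫ (α_ _ _ _).inv ≫ (D.c (D.y A ≫ D.y (D.P A))).hom ▷ D.ext (𝟙 (D.P A))
          ≫ (α_ _ _ _).hom := by
  rw [← lanUnit_fac D A, Iso.hom_inv_id_assoc]

/-- The counit of `P y_A ⊣ μ_A`. -/
noncomputable def lanCounit : D.ext (𝟙 (D.P A)) ≫ D.lan (D.y A) ⟶ 𝟙 (D.P (D.P A)) :=
  (respects_toExhibits (D.ext_respects (𝟙 (D.P A)) (D.y A ≫ D.y (D.P A)))).lift
    ((λ_ (D.lan (D.y A))).hom ≫ theta D A ≫ (ρ_ (D.y (D.P A))).inv)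

lemma lanCounit_fac :
    ((D.c (𝟙 (D.P A))).hom ▷ D.lan (D.y A) ≫ (α_ _ _ _).hom) ≫ D.y (D.P A) ◁ lanCounit D A
      = (λ_ (D.lan (D.y A))).hom ≫ theta D A ≫ (ρ_ (D.y (D.P A))).inv :=
  (respects_toExhibits (D.ext_respects (𝟙 (D.P A)) (D.y A ≫ D.y (D.P A)))).fac _

lemma lanUnit_theta : lanUnit D A ≫ theta D A ▷ D.ext (𝟙 (D.P A)) = (D.c (𝟙 (D.P A))).hom := by
  apply (D.y_selfExt A).hom_ext
  have h1 : (ρ_ (D.y A)).inv ≫ D.y A ◁ (lanUnit D A ≫ theta D A ▷ D.ext (𝟙 (D.P A)))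
      = ((ρ_ (D.y A)).inv ≫ D.y A ◁ lanUnit D A)
        ≫ D.y A ◁ (theta D A ▷ D.ext (𝟙 (D.P A))) := by
    simp
  rw [h1, lanUnit_fac]
  calc ((ρ_ (D.y A)).inv ≫ D.y A ◁ (D.c (𝟙 (D.P A))).hom ≫ (α_ _ _ _).inv
          ≫ (D.c (D.y A ≫ D.y (D.P A))).hom ▷ D.ext (𝟙 (D.P A)) ≫ (α_ _ _ _).hom)
        ≫ D.y A ◁ (theta D A ▷ D.ext (𝟙 (D.P A)))
      = 𝟙 _ ⊗≫ D.y A ◁ (D.c (𝟙 (D.P A))).hom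
          ⊗≫ ((D.c (D.y A ≫ D.y (D.P A))).hom ≫ D.y A ◁ theta D A) ▷ D.ext (𝟙 (D.P A))
          ⊗≫ 𝟙 _ := by
        bicategory
    _ = (ρ_ (D.y A)).inv ≫ D.y A ◁ (D.c (𝟙 (D.P A))).hom := by
        rw [theta_fac]; bicategory

/-- The adjunction `P y_A ⊣ μ_A`. -/
noncomputable def adjLanMu :
    Bicategory.Adjunction (D.lan (D.y A)) (D.ext (𝟙 (D.P A))) where
  unit := lanUnit D A
  counit := lanCounit D A
  left_triangle := by
    have key : (λ_ (D.lan (D.y A))).inv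
        ≫ leftZigzag (lanUnit D A) (lanCounit D A) ≫ (ρ_ (D.lan (D.y A))).hom
        = 𝟙 (D.lan (D.y A)) := by
      apply (D.ext_isLeftExt (D.y A ≫ D.y (D.P A))).hom_ext
      rw [Bicategory.whiskerLeft_id, Category.comp_id]
      calc (D.c (D.y A ≫ D.y (D.P A))).hom ≫ D.y A ◁ ((λ_ (D.lan (D.y A))).inv
              ≫ leftZigzag (lanUnit D A) (lanCounit D A) ≫ (ρ_ (D.lan (D.y A))).hom)
          = (D.c (D.y A ≫ D.y (D.P A))).hom ⊗≫ (D.y A ◁ lanUnit D A) ▷ D.lan (D.y A)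
              ⊗≫ (D.y A ≫ D.lan (D.y A)) ◁ lanCounit D A ⊗≫ 𝟙 _ := by
            bicategory
        _ = (D.c (D.y A ≫ D.y (D.P A))).hom
              ⊗≫ D.y A ◁ ((D.c (𝟙 (D.P A))).hom ▷ D.lan (D.y A))
              ⊗≫ ((D.c (D.y A ≫ D.y (D.P A))).hom ▷ (D.ext (𝟙 (D.P A)) ≫ D.lan (D.y A))
                ≫ (D.y A ≫ D.lan (D.y A)) ◁ lanCounit D A) ⊗≫ 𝟙 _ := by
            rw [whiskerLeft_lanUnit]; bicategory
        _ = (D.c (D.y A ≫ D.y (D.P A))).hom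
              ⊗≫ D.y A ◁ (((D.c (𝟙 (D.P A))).hom ▷ D.lan (D.y A) ≫ (α_ _ _ _).hom)
                ≫ D.y (D.P A) ◁ lanCounit D A)
              ⊗≫ (D.c (D.y A ≫ D.y (D.P A))).hom ⊗≫ 𝟙 _ := by
            rw [← whisker_exchange]; bicategory
        _ = ((D.c (D.y A ≫ D.y (D.P A))).hom ≫ D.y A ◁ theta D A)
              ⊗≫ (D.c (D.y A ≫ D.y (D.P A))).hom := by
            rw [lanCounit_fac]; bicategory
        _ = (D.c (D.y A ≫ D.y (D.P A))).hom := by rw [theta_fac]; bicategory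
    calc leftZigzag (lanUnit D A) (lanCounit D A)
        = (λ_ _).hom ≫ ((λ_ _).inv
            ≫ leftZigzag (lanUnit D A) (lanCounit D A) ≫ (ρ_ _).hom) ≫ (ρ_ _).inv := by
          simp
      _ = (λ_ _).hom ≫ (ρ_ _).inv := by rw [key]; simp
  right_triangle := by
    have key : (ρ_ (D.ext (𝟙 (D.P A)))).inv
        ≫ rightZigzag (lanUnit D A) (lanCounit D A) ≫ (λ_ (D.ext (𝟙 (D.P A)))).hom
        = 𝟙 (D.ext (𝟙 (D.P A))) := by
      apply (D.ext_isLeftExt (𝟙 (D.P A))).hom_ext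
      rw [Bicategory.whiskerLeft_id, Category.comp_id]
      calc (D.c (𝟙 (D.P A))).hom ≫ D.y (D.P A) ◁ ((ρ_ (D.ext (𝟙 (D.P A)))).inv
              ≫ rightZigzag (lanUnit D A) (lanCounit D A) ≫ (λ_ (D.ext (𝟙 (D.P A)))).hom)
          = 𝟙 _ ⊗≫ ((D.c (𝟙 (D.P A))).hom ▷ 𝟙 (D.P A)
              ≫ (D.y (D.P A) ≫ D.ext (𝟙 (D.P A))) ◁ lanUnit D A)
              ⊗≫ D.y (D.P A) ◁ (lanCounit D A ▷ D.ext (𝟙 (D.P A))) ⊗≫ 𝟙 _ := by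
            bicategory
        _ = 𝟙 _ ⊗≫ (𝟙 (D.P A) ◁ lanUnit D A
              ≫ (D.c (𝟙 (D.P A))).hom ▷ (D.lan (D.y A) ≫ D.ext (𝟙 (D.P A))))
              ⊗≫ D.y (D.P A) ◁ (lanCounit D A ▷ D.ext (𝟙 (D.P A))) ⊗≫ 𝟙 _ := by
            rw [← whisker_exchange]
        _ = lanUnit D A
              ⊗≫ (((D.c (𝟙 (D.P A))).hom ▷ D.lan (D.y A) ≫ (α_ _ _ _).hom)
                ≫ D.y (D.P A) ◁ lanCounit D A) ▷ D.ext (𝟙 (D.P A)) ⊗≫ 𝟙 _ := by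
            bicategory
        _ = lanUnit D A
              ⊗≫ ((λ_ (D.lan (D.y A))).hom ≫ theta D A ≫ (ρ_ (D.y (D.P A))).inv)
                ▷ D.ext (𝟙 (D.P A)) ⊗≫ 𝟙 _ := by
            rw [lanCounit_fac]
        _ = (lanUnit D A ≫ theta D A ▷ D.ext (𝟙 (D.P A))) ⊗≫ 𝟙 _ := by bicategory
        _ = (D.c (𝟙 (D.P A))).hom := by rw [lanUnit_theta]; bicategory
    calc rightZigzag (lanUnit D A) (lanCounit D A)
        = (ρ_ _).hom ≫ ((ρ_ _).inv
            ≫ rightZigzag (lanUnit D A) (lanCounit D A) ≫ (λ_ _).hom) ≫ (λ_ _).inv := by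
          simp
      _ = (ρ_ _).hom ≫ (λ_ _).inv := by rw [key]; simp

end KZAdjLan

section Admissible

variable (D : KZDoctrine 𝒞) (A : 𝒞)

lemma admissible_y : AdmissibleData D (D.y A) (𝟙 (D.P A)) (ρ_ (D.y A)).inv := by
  constructor
  · exact D.y_selfExt A
  · intro X hX H Hb cH hH
    refine hH.of_iso cH.symm (λ_ Hb).symm ?_
    rw [Iso.symm_hom, Iso.symm_hom, Iso.inv_hom_id_assoc]
    bicategory

lemma admissible_id :
    AdmissibleData D (𝟙 (D.P A)) (D.y (D.P A)) (λ_ (D.y (D.P A))).inv := by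
  constructor
  · exact exhibits_id_ext (D.y (D.P A))
  · intro X hX H Hb cH hH
    refine (exhibits_id_ext (D.y (D.P A) ≫ Hb)).of_iso (Iso.refl _) (Iso.refl _) ?_
    simp only [Iso.refl_hom, Category.id_comp, Bicategory.whiskerLeft_id, Category.comp_id]
    bicategory

end Admissible

/-- the adjoint triple `P y_A ⊣ μ_A ⊣ y_{P A}` where
`P y_A := lan (y A)` and `μ_A := D.ext (𝟙 (P A))`; in particular both `y A` and
`R_{y A} = 𝟙 (P A)` are `P`-admissible, and `R_{R_{y A}} = y (P A)`. -/
theorem stmt17 (D : KZDoctrine 𝒞) (A : 𝒞) :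
    Nonempty (Bicategory.Adjunction (D.lan (D.y A)) (D.ext (𝟙 (D.P A)))) ∧
    Nonempty (Bicategory.Adjunction (D.ext (𝟙 (D.P A))) (D.y (D.P A))) ∧
    AdmissibleData D (D.y A) (𝟙 (D.P A)) (ρ_ (D.y A)).inv ∧
    AdmissibleData D (𝟙 (D.P A)) (D.y (D.P A)) (λ_ (D.y (D.P A))).inv :=
  ⟨⟨adjLanMu D A⟩, ⟨adjMuY D A⟩, admissible_y D A, admissible_id D A⟩
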